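/- Let v_1, …, v_N ∈ ℝ^n and let (a(t), b(t)) be a differentiable solution of the system ȧ_k = a_k b_k, ḃ_k = Σ_{i=1}^N M_{ki} a_i (k = 1, …, N), where M_{ki} = ⟨v_k, v_i⟩, with a_i(t) > 0 for all t and i. If λ_1, …, λ_N ∈ ℝ satisfy Σ_{i=1}^N λ_i v_i = 0, then the function F_2(t) = Π_{i=1}^N a_i(t)^{λ_i} satisfies F_2'(t) = F_1(t)·F_2(t) where F_1(t) = Σ_i λ_i b_i(t); in particular, if F_1(0) = 0 then F_2 is constant in t. -/

import Mathlib

/-- If `(a(t), b(t))` solves `ȧ_k = a_k b_k`, `ḃ_k = Σ_i M_{ki} a_i`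
with `M_{ki} = ⟨v_k, v_i⟩`, all `a_i(t) > 0`, and `Σ_i λ_i v_i = 0`, then
`F_2(t) = Π_i a_i(t)^{λ_i}` satisfies `F_2' = F_1·F_2` where `F_1 = Σ_i λ_i b_i`;
in particular, if `F_1(0) = 0` then `F_2` is constant. -/
theorem F2_is_integral (n N : ℕ) (v : Fin N → Fin n → ℝ)
    (a b : ℝ → Fin N → ℝ)
    (ha : ∀ (t : ℝ) (k : Fin N), HasDerivAt (fun s => a s k) (a t k * b t k) t)
    (hb : ∀ (t : ℝ) (k : Fin N), HasDerivAt (fun s => b s k)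
      (∑ i, (∑ j, v k j * v i j) * a t i) t)
    (hpos : ∀ (t : ℝ) (i : Fin N), 0 < a t i)
    (lam : Fin N → ℝ)
    (hlam : ∀ j : Fin n, ∑ i, lam i * v i j = 0) :
    (∀ t : ℝ, HasDerivAt (fun s => ∏ i, Real.rpow (a s i) (lam i))
      ((∑ i, lam i * b t i) * ∏ i, Real.rpow (a t i) (lam i)) t) ∧
    ((∑ i, lam i * b 0 i) = 0 →
      ∀ t : ℝ, ∏ i, Real.rpow (a t i) (lam i) = ∏ i, Real.rpow (a 0 i) (lam i)) := by
  -- First part: derivative of F2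
  have hF2 : ∀ t : ℝ, HasDerivAt (fun s => ∏ i, Real.rpow (a s i) (lam i))
      ((∑ i, lam i * b t i) * ∏ i, Real.rpow (a t i) (lam i)) t := by
    intro t
    have hfac : ∀ i : Fin N, HasDerivAt (fun s => Real.rpow (a s i) (lam i))
        (lam i * b t i * Real.rpow (a t i) (lam i)) t := by
      intro i
      have h := (ha t i).rpow_const (p := lam i) (Or.inl (hpos t i).ne')
      convert h using 1
      case e'_8 => rfl
      have hne : a t i ≠ 0 := (hpos t i).ne'
      rw [Real.rpow_sub_one hne]
      field_simp
      ring
      rfl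
    have h := HasDerivAt.fun_finsetProd (u := Finset.univ)
      (f := fun i s => Real.rpow (a s i) (lam i))
      (f' := fun i => lam i * b t i * Real.rpow (a t i) (lam i))
      (x := t) (fun i _ => hfac i)
    convert h using 1
    case e'_4 => rfl
    case e'_5 => rfl
    rw [Finset.sum_mul]
    refine Finset.sum_congr rfl fun i _ => ?_
    rw [smul_eq_mul]
    rw [show (∏ j ∈ Finset.univ.erase i, Real.rpow (a t j) (lam j)) *
        (lam i * b t i * Real.rpow (a t i) (lam i)) =
        lam i * b t i * ((∏ j ∈ Finset.univ.erase i, Real.rpow (a t j) (lam j)) *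
          Real.rpow (a t i) (lam i)) by ring,
      Finset.prod_erase_mul _ _ (Finset.mem_univ i)]
  refine ⟨hF2, fun h0 t => ?_⟩
  -- F1 has derivative 0
  have hF1 : ∀ t : ℝ, HasDerivAt (fun s => ∑ i, lam i * b s i) 0 t := by
    intro t
    have h := HasDerivAt.sum (u := Finset.univ)
      (A := fun i s => lam i * b s i)
      (A' := fun i => lam i * ∑ k, (∑ j, v i j * v k j) * a t k)
      (x := t) (fun i _ => (hb t i).const_mul (lam i))
    convert h using 1
    case e'_4 => rfl
    case e'_5 => rfl
    case e'_8 => ext s; simp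
    have e1 : ∀ i : Fin N, lam i * ∑ k, (∑ j, v i j * v k j) * a t k
        = ∑ j, lam i * v i j * ∑ k, v k j * a t k := by
      intro i
      simp only [Finset.mul_sum, Finset.sum_mul]
      rw [Finset.sum_comm]
      exact Finset.sum_congr rfl fun j _ => Finset.sum_congr rfl fun k _ => by ring
    have e2 : (∑ i, lam i * ∑ k, (∑ j, v i j * v k j) * a t k) = 0 := by
      calc (∑ i, lam i * ∑ k, (∑ j, v i j * v k j) * a t k)
          = ∑ i, ∑ j, lam i * v i j * ∑ k, v k j * a t k :=
            Finset.sum_congr rfl fun i _ => e1 i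
        _ = ∑ j, ∑ i, lam i * v i j * ∑ k, v k j * a t k := Finset.sum_comm
        _ = ∑ j : Fin n, (∑ i, lam i * v i j) * ∑ k, v k j * a t k := by
            refine Finset.sum_congr rfl fun j _ => ?_
            rw [Finset.sum_mul]
        _ = 0 := by simp [hlam]
    rw [e2]
  -- hence F1 is constant, equal to 0
  have hF1const : ∀ t : ℝ, (∑ i, lam i * b t i) = 0 := by
    intro t
    have := is_const_of_deriv_eq_zero (f := fun s => ∑ i, lam i * b s i)
      (fun s => (hF1 s).differentiableAt) (fun s => (hF1 s).deriv) t 0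
    rw [this, h0]
  -- so F2 has derivative 0 everywhere
  have hF2' : ∀ t : ℝ, HasDerivAt (fun s => ∏ i, Real.rpow (a s i) (lam i)) 0 t := by
    intro t
    have := hF2 t
    rwa [hF1const t, zero_mul] at this
  exact is_const_of_deriv_eq_zero (fun s => (hF2' s).differentiableAt)
    (fun s => (hF2' s).deriv) t 0
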